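/- Assume the sample clouds N_n = {X_E^1/log n, …, X_E^n/log n} converge in probability onto a limit set G with gauge function g, and that the angular dependence function λ(ω) exists for each ω in the simplex S_Σ. Then r_ω = [min_{y ∈ B_ω} g(y)]^{−1}, and hence λ(ω) = max(ω₁,…,ω_d) × min_{y ∈ B_ω} g(y), where B_ω = ∪_{i=1}^d {x ∈ ℝ_+^d : x_i = ω_i/max(ω), x_j ≥ ω_j/max(ω) for all j ≠ i} is the boundary of R_ω = ∏_{j=1}^d (ω_j/max(ω), ∞), and r_ω = min{r ∈ [0,1] : rR_ω ∩ G = ∅}. -/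

import Mathlib

open MeasureTheory Filter Topology ProbabilityTheory Pointwise
open scoped ENNReal

/-- The `n`-point sample cloud `{X 1 / r n, …, X n / r n}` of the scaled observations. -/
def sampleCloud {Ω : Type*} {d : ℕ} (X : ℕ → Ω → (Fin d → ℝ)) (r : ℕ → ℝ)
    (n : ℕ) (ω : Ω) : Set (Fin d → ℝ) :=
  {y | ∃ i, 1 ≤ i ∧ i ≤ n ∧ y = (r n)⁻¹ • X i ω}

/-- Convergence in probability of random sets onto a deterministic set `G`, in the sense that
the Hausdorff distance to `G` tends to `0` in probability. -/
def ConvInProbOnto {Ω : Type*} [MeasurableSpace Ω] {d : ℕ} (μ : Measure Ω)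
    (N : ℕ → Ω → Set (Fin d → ℝ)) (G : Set (Fin d → ℝ)) : Prop :=
  ∀ ε : ℝ, 0 < ε →
    Tendsto (fun n => μ {ω | ε < Metric.hausdorffDist (N n ω) G}) atTop (𝓝 0)

/-- `ℓ` is slowly varying at infinity. -/
def SlowlyVaryingAtTop (ℓ : ℝ → ℝ) : Prop :=
  ∀ x : ℝ, 0 < x → Tendsto (fun t => ℓ (t * x) / ℓ t) atTop (𝓝 1)

lemma sv_log_div_tendsto (ℓ : ℝ → ℝ) (hsv : SlowlyVaryingAtTop ℓ) (lam : ℝ) (h : ℝ → ℝ)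
    (hanti : ∀ a b : ℝ, 0 < a → a ≤ b → h b ≤ h a)
    (hnn : ∀ v : ℝ, 0 < v → 0 ≤ h v)
    (heq : ∀ v : ℝ, 0 < v → h v = ℓ (Real.exp v) * Real.exp (-(lam * v))) :
    Tendsto (fun v => Real.log (ℓ (Real.exp v)) / v) atTop (𝓝 0) := by
  have hnonneg : ∀ v : ℝ, 0 < v → 0 ≤ ℓ (Real.exp v) := by
    intro v hv
    have h1 : 0 ≤ h v := hnn v hv
    rw [heq v hv] at h1
    nlinarith [Real.exp_pos (-(lam * v))]
  have hne : ∀ᶠ t : ℝ in atTop, ℓ t ≠ 0 := by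
    have h2 : ∀ᶠ t : ℝ in atTop, (1:ℝ)/2 < ℓ (t * 2) / ℓ t :=
      (hsv 2 two_pos).eventually_const_lt (by norm_num)
    filter_upwards [h2] with t ht h0
    rw [h0, div_zero] at ht
    norm_num at ht
  have hposv : ∀ᶠ v : ℝ in atTop, 0 < ℓ (Real.exp v) := by
    have h1 : ∀ᶠ v : ℝ in atTop, ℓ (Real.exp v) ≠ 0 :=
      Real.tendsto_exp_atTop.eventually hne
    filter_upwards [h1, eventually_gt_atTop (0:ℝ)] with v hv hv0
    exact lt_of_le_of_ne (hnonneg v hv0) (Ne.symm hv)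
  obtain ⟨V₀, hV₀⟩ := (eventually_atTop).mp hposv
  set f : ℝ → ℝ := fun v => Real.log (ℓ (Real.exp v)) with hf
  have hstep : Tendsto (fun v => f (v + 1) - f v) atTop (𝓝 0) := by
    have h1 : Tendsto (fun v : ℝ => ℓ (Real.exp v * Real.exp 1) / ℓ (Real.exp v)) atTop (𝓝 1) :=
      (hsv (Real.exp 1) (Real.exp_pos 1)).comp Real.tendsto_exp_atTop
    have h2 : Tendsto (fun v : ℝ => Real.log (ℓ (Real.exp v * Real.exp 1) / ℓ (Real.exp v)))
        atTop (𝓝 0) := by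
      have := (Real.continuousAt_log (one_ne_zero)).tendsto.comp h1
      simpa [Real.log_one, Function.comp_def] using this
    refine h2.congr' ?_
    have h3 : Tendsto (fun v : ℝ => v + 1) atTop atTop := tendsto_atTop_add_const_right _ _ tendsto_id
    filter_upwards [hposv, h3.eventually hposv] with v hv hv1
    rw [← Real.exp_add]
    rw [Real.log_div (ne_of_gt hv1) (ne_of_gt hv)]
  have hmono : ∀ a b : ℝ, 0 < a → V₀ ≤ a → a ≤ b → f b ≤ f a + lam * (b - a) := by
    intro a b ha haV hab
    have hb : 0 < b := lt_of_lt_of_le ha hab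
    have h1 : h b ≤ h a := hanti a b ha hab
    rw [heq a ha, heq b hb] at h1
    have hpa : 0 < ℓ (Real.exp a) := hV₀ a haV
    have hpb : 0 < ℓ (Real.exp b) := hV₀ b (le_trans haV hab)
    have h2 : ℓ (Real.exp b) ≤ ℓ (Real.exp a) * Real.exp (lam * (b - a)) := by
      have e1 : (0:ℝ) < Real.exp (-(lam * b)) := Real.exp_pos _
      rw [← mul_le_mul_iff_of_pos_right e1]
      calc ℓ (Real.exp b) * Real.exp (-(lam * b))
          ≤ ℓ (Real.exp a) * Real.exp (-(lam * a)) := h1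
        _ = ℓ (Real.exp a) * Real.exp (lam * (b - a)) * Real.exp (-(lam * b)) := by
            rw [mul_assoc, ← Real.exp_add]; ring_nf
    have h3 := Real.log_le_log hpb h2
    rw [Real.log_mul (ne_of_gt hpa) (ne_of_gt (Real.exp_pos _)), Real.log_exp] at h3
    simpa [hf] using h3
  rw [Metric.tendsto_atTop]
  intro ε hε
  set ε' : ℝ := ε / 2 with hε'
  have hε'pos : 0 < ε' := by positivity
  obtain ⟨V₁, hV₁⟩ := (eventually_atTop).mp
    (hstep.eventually (Metric.ball_mem_nhds (0:ℝ) hε'pos))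
  set V : ℝ := max (max V₀ V₁) 1 with hV
  have hVpos : (0:ℝ) < V := lt_of_lt_of_le one_pos (le_max_right _ _)
  have hVV₀ : V₀ ≤ V := le_trans (le_max_left _ _) (le_max_left _ _)
  have hVV₁ : V₁ ≤ V := le_trans (le_max_right _ _) (le_max_left _ _)
  have hstepV : ∀ v : ℝ, V ≤ v → |f (v + 1) - f v| < ε' := by
    intro v hv
    have := hV₁ v (le_trans hVV₁ hv)
    simpa [Real.dist_eq] using this
  have hbase : ∀ u : ℝ, V ≤ u → u < V + 1 → |f u - f V| ≤ |lam| + ε' := by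
    intro u hu hu1
    have hupos : 0 < u := lt_of_lt_of_le hVpos hu
    have h1 : f u ≤ f V + lam * (u - V) := hmono V u hVpos hVV₀ hu
    have h2 : f (V + 1) ≤ f u + lam * (V + 1 - u) :=
      hmono u (V + 1) hupos (le_trans hVV₀ hu) (by linarith)
    have h3 : |f (V+1) - f V| < ε' := hstepV V le_rfl
    rw [abs_sub_le_iff]
    have hl1 := le_abs_self lam
    have hl2 := neg_abs_le lam
    constructor
    · nlinarith
    · rw [abs_sub_lt_iff] at h3
      nlinarith [h3.2]
  have hclaim : ∀ k : ℕ, ∀ u : ℝ, V + k ≤ u → u < V + k + 1 →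
      |f u - f V| ≤ ε' * k + (|lam| + ε') := by
    intro k
    induction k with
    | zero => intro u hu hu1; simpa using hbase u (by simpa using hu) (by push_cast at hu1 ⊢; linarith)
    | succ k ih =>
      intro u hu hu1
      push_cast at hu hu1
      have h1 : V + k ≤ u - 1 := by linarith
      have h2 : u - 1 < V + k + 1 := by linarith
      have h3 := ih (u - 1) (by push_cast; linarith) (by push_cast; linarith)
      have h4 : |f (u - 1 + 1) - f (u - 1)| < ε' := hstepV (u - 1) (by linarith [Nat.cast_nonneg (α := ℝ) k])
      have h5 : u - 1 + 1 = u := by ring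
      rw [h5] at h4
      push_cast
      calc |f u - f V| ≤ |f u - f (u-1)| + |f (u-1) - f V| := abs_sub_le _ _ _
        _ ≤ ε' + (ε' * k + (|lam| + ε')) := by
            exact add_le_add (le_of_lt h4) h3
        _ = ε' * (k + 1) + (|lam| + ε') := by ring
  set C : ℝ := |f V| + |lam| + ε' with hC
  have hCpos : 0 < C := by positivity
  refine ⟨max V (C / ε' + 1), ?_⟩
  intro u hu
  have huV : V ≤ u := le_trans (le_max_left _ _) hu
  have huC : C / ε' + 1 ≤ u := le_trans (le_max_right _ _) hu
  have hupos : 0 < u := lt_of_lt_of_le hVpos huV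
  set k : ℕ := ⌊u - V⌋₊ with hk
  have hk1 : (k:ℝ) ≤ u - V := Nat.floor_le (by linarith)
  have hk2 : u - V < k + 1 := Nat.lt_floor_add_one _
  have hfu : |f u - f V| ≤ ε' * k + (|lam| + ε') := hclaim k u (by linarith) (by linarith)
  have hbound : |f u| ≤ ε' * u + C := by
    have h1 : |f u| ≤ |f u - f V| + |f V| := by
      have := abs_add_le (f u - f V) (f V); simpa using this
    have h2 : ε' * k ≤ ε' * u := by
      apply mul_le_mul_of_nonneg_left _ (le_of_lt hε'pos)
      linarith
    rw [hC]; linarith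
  have : dist (f u / u) 0 = |f u| / u := by
    rw [Real.dist_eq, sub_zero, abs_div, abs_of_pos hupos]
  rw [this]
  have h6 : |f u| / u ≤ ε' + C / u := by
    rw [div_le_iff₀ hupos, add_mul, div_mul_cancel₀ _ (ne_of_gt hupos)]
    linarith
  have h7 : C / u < ε' := by
    rw [div_lt_iff₀ hupos]
    have : C / ε' * ε' = C := div_mul_cancel₀ _ (ne_of_gt hε'pos)
    nlinarith
  calc |f u| / u ≤ ε' + C / u := h6
    _ < ε' + ε' := by linarith
    _ = ε := by rw [hε']; ring

lemma sv_npow_aux (ℓ : ℝ → ℝ) (hsv : SlowlyVaryingAtTop ℓ) (lam : ℝ) (h : ℝ → ℝ)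
    (hanti : ∀ a b : ℝ, 0 < a → a ≤ b → h b ≤ h a)
    (hnn : ∀ v : ℝ, 0 < v → 0 ≤ h v)
    (heq : ∀ v : ℝ, 0 < v → h v = ℓ (Real.exp v) * Real.exp (-(lam * v)))
    (s : ℝ) (hs : 0 < s) :
    (lam * s < 1 → ∀ᶠ n : ℕ in atTop, 1 ≤ (n:ℝ) * h (s * Real.log n)) ∧
    (1 < lam * s → ∀ᶠ n : ℕ in atTop, (n:ℝ) * h (s * Real.log n) < 1/2) := by
  have hφ := sv_log_div_tendsto ℓ hsv lam h hanti hnn heq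
  set φ : ℝ → ℝ := fun v => Real.log (ℓ (Real.exp v)) / v with hφdef
  -- positivity of ℓ eventually (as in previous lemma)
  have hnonneg : ∀ v : ℝ, 0 < v → 0 ≤ ℓ (Real.exp v) := by
    intro v hv
    have h1 : 0 ≤ h v := hnn v hv
    rw [heq v hv] at h1
    nlinarith [Real.exp_pos (-(lam * v))]
  have hne : ∀ᶠ t : ℝ in atTop, ℓ t ≠ 0 := by
    have h2 : ∀ᶠ t : ℝ in atTop, (1:ℝ)/2 < ℓ (t * 2) / ℓ t :=
      (hsv 2 two_pos).eventually_const_lt (by norm_num)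
    filter_upwards [h2] with t ht h0
    rw [h0, div_zero] at ht
    norm_num at ht
  have hposv : ∀ᶠ v : ℝ in atTop, 0 < ℓ (Real.exp v) := by
    have h1 : ∀ᶠ v : ℝ in atTop, ℓ (Real.exp v) ≠ 0 :=
      Real.tendsto_exp_atTop.eventually hne
    filter_upwards [h1, eventually_gt_atTop (0:ℝ)] with v hv hv0
    exact lt_of_le_of_ne (hnonneg v hv0) (Ne.symm hv)
  -- the composed map n ↦ s * log n tends to +∞
  have hlogn : Tendsto (fun n : ℕ => Real.log (n:ℝ)) atTop atTop :=
    Real.tendsto_log_atTop.comp tendsto_natCast_atTop_atTop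
  have hslogn : Tendsto (fun n : ℕ => s * Real.log (n:ℝ)) atTop atTop :=
    hlogn.const_mul_atTop hs
  -- key identity
  have hid : ∀ᶠ n : ℕ in atTop, (n:ℝ) * h (s * Real.log n) =
      Real.exp (Real.log n * (1 - lam * s + s * φ (s * Real.log n))) := by
    filter_upwards [hslogn.eventually hposv, eventually_gt_atTop 1] with n hpos hn1
    have hn0 : (0:ℝ) < (n:ℝ) := by exact_mod_cast Nat.lt_of_lt_of_le Nat.zero_lt_one hn1.le
    have hlogpos : 0 < Real.log (n:ℝ) := Real.log_pos (by exact_mod_cast hn1)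
    have hv : 0 < s * Real.log (n:ℝ) := mul_pos hs hlogpos
    rw [heq _ hv]
    have e1 : ℓ (Real.exp (s * Real.log n)) = Real.exp (Real.log (ℓ (Real.exp (s * Real.log n)))) :=
      (Real.exp_log hpos).symm
    rw [e1]
    have e2 : (n:ℝ) = Real.exp (Real.log n) := (Real.exp_log hn0).symm
    conv_lhs => rw [e2]
    rw [← Real.exp_add, ← Real.exp_add]
    congr 1
    have e3 : s * Real.log (n:ℝ) ≠ 0 := ne_of_gt hv
    simp only [Real.log_exp, hφdef]
    field_simp
    ring
  have hfac : Tendsto (fun n : ℕ => 1 - lam * s + s * φ (s * Real.log n)) atTop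
      (𝓝 (1 - lam * s)) := by
    have h1 : Tendsto (fun n : ℕ => φ (s * Real.log n)) atTop (𝓝 0) := hφ.comp hslogn
    have h2 : Tendsto (fun n : ℕ => s * φ (s * Real.log n)) atTop (𝓝 0) := by
      simpa using h1.const_mul s
    simpa using (tendsto_const_nhds (x := 1 - lam * s)).add h2
  constructor
  · intro hlt
    have h1 : Tendsto (fun n : ℕ => Real.log (n:ℝ) * (1 - lam * s + s * φ (s * Real.log n)))
        atTop atTop := hlogn.atTop_mul_pos (by linarith) hfac
    have h2 : Tendsto (fun n : ℕ => Real.exp (Real.log (n:ℝ) * (1 - lam * s + s * φ (s * Real.log n))))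
        atTop atTop := Real.tendsto_exp_atTop.comp h1
    filter_upwards [hid, h2.eventually_ge_atTop 1] with n e1 e2
    rw [e1]; exact e2
  · intro hlt
    have h1 : Tendsto (fun n : ℕ => Real.log (n:ℝ) * (1 - lam * s + s * φ (s * Real.log n)))
        atTop atBot := hlogn.atTop_mul_neg (by linarith) hfac
    have h2 : Tendsto (fun n : ℕ => Real.exp (Real.log (n:ℝ) * (1 - lam * s + s * φ (s * Real.log n))))
        atTop (𝓝 0) := Real.tendsto_exp_atBot.comp h1
    have h3 := h2.eventually (eventually_lt_nhds (show (0:ℝ) < 1/2 by norm_num))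
    filter_upwards [hid, h3] with n e1 e2
    rw [e1]; exact e2

section Geom

lemma geom_main {d : ℕ} (hd : 0 < d) (g : (Fin d → ℝ) → ℝ) (hgcont : Continuous g)
    (hghomog : ∀ t : ℝ, 0 < t → ∀ x, g (t • x) = t * g x)
    (hgmax : ∀ x : Fin d → ℝ, (∀ j, 0 ≤ x j) → ∀ j, x j ≤ g x)
    (ω : Fin d → ℝ) (hω : ∀ j, 0 ≤ ω j) (hsum : ∑ j, ω j = 1) :
    ∃ l : Fin d, (∀ j, ω j ≤ ω l) ∧ (⨆ i, ω i) = ω l ∧ 0 < ω l := by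
  haveI : Nonempty (Fin d) := ⟨⟨0, hd⟩⟩
  obtain ⟨l, hl⟩ := Finite.exists_max ω
  refine ⟨l, hl, ?_, ?_⟩
  · exact le_antisymm (ciSup_le hl) (le_ciSup (Set.Finite.bddAbove (Set.finite_range ω)) l)
  · by_contra hneg
    push_neg at hneg
    have h0 : ∀ j, ω j = 0 := fun j => le_antisymm (le_trans (hl j) hneg) (hω j)
    rw [Finset.sum_congr rfl (fun j _ => h0 j)] at hsum
    simp at hsum

end Geom

namespace AngularAux

variable {d : ℕ}

/-- The boundary set `B_ω`. -/
def Bset (ω : Fin d → ℝ) (M : ℝ) : Set (Fin d → ℝ) :=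
  ⋃ i : Fin d, {x : Fin d → ℝ | (∀ j, 0 ≤ x j) ∧ x i = ω i / M ∧ ∀ j, j ≠ i → ω j / M ≤ x j}

lemma self_mem_Bset (ω : Fin d → ℝ) (hω : ∀ j, 0 ≤ ω j) (M : ℝ) (hM : 0 < M) (l : Fin d) :
    (fun j => ω j / M) ∈ Bset ω M :=
  Set.mem_iUnion.mpr ⟨l, fun j => div_nonneg (hω j) hM.le, rfl, fun j _ => le_refl _⟩

lemma one_le_on_Bset (g : (Fin d → ℝ) → ℝ)
    (hgmax : ∀ x : Fin d → ℝ, (∀ j, 0 ≤ x j) → ∀ j, x j ≤ g x)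
    (ω : Fin d → ℝ) (M : ℝ) (hM : 0 < M) (l : Fin d) (hl : ω l = M)
    {x : Fin d → ℝ} (hx : x ∈ Bset ω M) : 1 ≤ g x := by
  obtain ⟨i, hnn, hxi, hge⟩ := Set.mem_iUnion.mp hx
  have hxl : 1 ≤ x l := by
    rcases eq_or_ne l i with h | h
    · subst h; rw [hxi, hl, div_self (ne_of_gt hM)]
    · have := hge l h; rwa [hl, div_self (ne_of_gt hM)] at this
  exact le_trans hxl (hgmax x hnn l)

lemma bddBelow_image (g : (Fin d → ℝ) → ℝ)
    (hgmax : ∀ x : Fin d → ℝ, (∀ j, 0 ≤ x j) → ∀ j, x j ≤ g x)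
    (ω : Fin d → ℝ) (M : ℝ) (hM : 0 < M) (l : Fin d) (hl : ω l = M) :
    BddBelow (g '' Bset ω M) := by
  refine ⟨1, ?_⟩
  rintro y ⟨x, hx, rfl⟩
  exact one_le_on_Bset g hgmax ω M hM l hl hx

lemma one_le_sInf (g : (Fin d → ℝ) → ℝ)
    (hgmax : ∀ x : Fin d → ℝ, (∀ j, 0 ≤ x j) → ∀ j, x j ≤ g x)
    (ω : Fin d → ℝ) (hω : ∀ j, 0 ≤ ω j) (M : ℝ) (hM : 0 < M) (l : Fin d) (hl : ω l = M) :
    1 ≤ sInf (g '' Bset ω M) := by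
  refine le_csInf ⟨g (fun j => ω j / M), Set.mem_image_of_mem _ (self_mem_Bset ω hω M hM l)⟩ ?_
  rintro y ⟨x, hx, rfl⟩
  exact one_le_on_Bset g hgmax ω M hM l hl hx

/-- Lemma L : any point strictly inside the region `R` has gauge strictly above the min on `B`. -/
lemma sInf_lt_gauge (g : (Fin d → ℝ) → ℝ)
    (hghomog : ∀ t : ℝ, 0 < t → ∀ x, g (t • x) = t * g x)
    (hgmax : ∀ x : Fin d → ℝ, (∀ j, 0 ≤ x j) → ∀ j, x j ≤ g x)
    (ω : Fin d → ℝ) (hω : ∀ j, 0 ≤ ω j) (M : ℝ) (hM : 0 < M) (l : Fin d) (hl : ω l = M)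
    (hωl : 0 < ω l)
    (u : Fin d → ℝ) (hu : ∀ j, ω j / M < u j) : sInf (g '' Bset ω M) < g u := by
  have hupos : ∀ j, 0 < u j := fun j => lt_of_le_of_lt (div_nonneg (hω j) hM.le) (hu j)
  set T : Finset (Fin d) := Finset.univ.filter (fun j => 0 < ω j) with hT
  have hlT : l ∈ T := by simp [hT, hωl]
  have hTne : T.Nonempty := ⟨l, hlT⟩
  set t₀ : ℝ := T.sup' hTne (fun j => (ω j / M) / u j) with ht₀
  obtain ⟨j₀, hj₀T, hj₀⟩ := T.exists_mem_eq_sup' hTne (fun j => (ω j / M) / u j)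
  have hωj₀ : 0 < ω j₀ := by simpa [hT] using hj₀T
  have ht₀eq : t₀ = (ω j₀ / M) / u j₀ := hj₀
  have ht₀pos : 0 < t₀ := by
    rw [ht₀eq]
    exact div_pos (div_pos hωj₀ hM) (hupos j₀)
  have ht₀lt : t₀ < 1 := by
    rw [ht₀eq, div_lt_one (hupos j₀)]
    exact hu j₀
  have hyB : t₀ • u ∈ Bset ω M := by
    refine Set.mem_iUnion.mpr ⟨j₀, ?_, ?_, ?_⟩
    · intro j
      exact mul_nonneg ht₀pos.le (hupos j).le
    · show t₀ * u j₀ = ω j₀ / M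
      rw [ht₀eq]
      exact div_mul_cancel₀ _ (ne_of_gt (hupos j₀))
    · intro j hj
      show ω j / M ≤ t₀ * u j
      rcases lt_or_eq_of_le (hω j) with h | h
      · have hjT : j ∈ T := by simp [hT, h]
        have := Finset.le_sup' (f := fun j => (ω j / M) / u j) hjT
        rw [← ht₀] at this
        rw [div_le_iff₀ (hupos j)] at this
        linarith [this]
      · rw [← h, zero_div]
        exact mul_nonneg ht₀pos.le (hupos j).le
  have h1 : sInf (g '' Bset ω M) ≤ g (t₀ • u) :=
    csInf_le (bddBelow_image g hgmax ω M hM l hl) (Set.mem_image_of_mem _ hyB)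
  have h2 : g (t₀ • u) = t₀ * g u := hghomog t₀ ht₀pos u
  have h3 : 1 < g u := by
    have h4 : 1 < u l := by
      have := hu l
      rwa [hl, div_self (ne_of_gt hM)] at this
    exact lt_of_lt_of_le h4 (hgmax u (fun j => (hupos j).le) l)
  calc sInf (g '' Bset ω M) ≤ t₀ * g u := h1.trans (le_of_eq h2)
    _ < 1 * g u := by
        apply mul_lt_mul_of_pos_right ht₀lt
        linarith
    _ = g u := one_mul _

/-- Lemma D : if `ρ * m < 1` there is a point of `G` strictly inside `ρ • R`. -/
lemma exists_interior_point (g : (Fin d → ℝ) → ℝ) (hgcont : Continuous g)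
    (hghomog : ∀ t : ℝ, 0 < t → ∀ x, g (t • x) = t * g x)
    (ω : Fin d → ℝ) (M : ℝ) (hM : 0 < M)
    {ρ : ℝ} (hρ : 0 < ρ) (hBne : (Bset ω M).Nonempty)
    (hρm : ρ * sInf (g '' Bset ω M) < 1) :
    ∃ x : Fin d → ℝ, (∀ j, ρ * (ω j / M) < x j) ∧ (∀ j, 0 ≤ x j) ∧ g x < 1 := by
  have h1 : sInf (g '' Bset ω M) < 1 / ρ := by
    rw [lt_div_iff₀ hρ]; linarith [hρm]
  obtain ⟨b, hbmem, hblt⟩ := exists_lt_of_csInf_lt (hBne.image g) h1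
  obtain ⟨y, hyB, rfl⟩ := hbmem
  obtain ⟨i, hynn, hyi, hyge⟩ := Set.mem_iUnion.mp hyB
  have hyallge : ∀ j, ω j / M ≤ y j := by
    intro j
    rcases eq_or_ne j i with h | h
    · rw [h, hyi]
    · exact hyge j h
  -- perturb into the open region
  have hcont : Continuous (fun ε : ℝ => g (y + ε • (fun _ => (1:ℝ)))) := by
    apply hgcont.comp
    exact continuous_const.add (continuous_id.smul continuous_const)
  have h3 : g (y + (0:ℝ) • (fun _ => (1:ℝ))) < 1 / ρ := by simpa using hblt
  have h2 : ∀ᶠ ε : ℝ in 𝓝 0, g (y + ε • (fun _ => (1:ℝ))) < 1 / ρ :=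
    (hcont.tendsto 0).eventually (eventually_lt_nhds h3)
  obtain ⟨δ, hδpos, hδ⟩ := Metric.eventually_nhds_iff.mp h2
  set ε : ℝ := δ / 2 with hε
  have hεpos : 0 < ε := by positivity
  have hεlt : dist ε (0:ℝ) < δ := by
    rw [Real.dist_eq, sub_zero, abs_of_pos hεpos]
    linarith
  have hgε : g (y + ε • (fun _ => (1:ℝ))) < 1 / ρ := hδ hεlt
  set z : Fin d → ℝ := y + ε • (fun _ => (1:ℝ)) with hz
  have hcomp : ∀ j, (ρ • z) j = ρ * (y j + ε) := by
    intro j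
    simp only [hz, Pi.smul_apply, Pi.add_apply, smul_eq_mul]
    ring
  refine ⟨ρ • z, ?_, ?_, ?_⟩
  · intro j
    rw [hcomp j]
    have h4 : ω j / M < y j + ε := by
      have := hyallge j; linarith
    exact mul_lt_mul_of_pos_left h4 hρ
  · intro j
    rw [hcomp j]
    have : (0:ℝ) ≤ y j + ε := by linarith [hynn j, hεpos]
    exact mul_nonneg hρ.le this
  · rw [hghomog ρ hρ]
    calc ρ * g z < ρ * (1/ρ) := mul_lt_mul_of_pos_left hgε hρ
      _ = 1 := by field_simp


/-- The closed region `K` determined by the support of `ω` is disjoint from `G`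
when `1 < s * M * m`. -/
lemma disjoint_G_K (g : (Fin d → ℝ) → ℝ) (hgcont : Continuous g)
    (hghomog : ∀ t : ℝ, 0 < t → ∀ x, g (t • x) = t * g x)
    (hgmax : ∀ x : Fin d → ℝ, (∀ j, 0 ≤ x j) → ∀ j, x j ≤ g x)
    (ω : Fin d → ℝ) (hω : ∀ j, 0 ≤ ω j) (M : ℝ) (hM : 0 < M) (l : Fin d) (hl : ω l = M)
    (hωl : 0 < ω l) (s : ℝ) (hs : 0 < s)
    (hsMm : 1 < s * M * sInf (g '' Bset ω M)) :
    Disjoint {x : Fin d → ℝ | (∀ j, 0 ≤ x j) ∧ g x ≤ 1}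
      {x : Fin d → ℝ | ∀ j, 0 < ω j → ω j * s ≤ x j} := by
  set m : ℝ := sInf (g '' Bset ω M) with hm
  have hmpos : 0 < m := by
    have h1 := one_le_sInf g hgmax ω hω M hM l hl
    rw [← hm] at h1
    linarith
  rw [Set.disjoint_left]
  rintro y ⟨hynn, hgy⟩ hyK
  have hsM : 0 < s * M := mul_pos hs hM
  have hm1 : 1 / (s * M) < m := by
    rw [div_lt_iff₀ hsM]
    nlinarith
  set t : ℝ := (1 / (s * M) + m) / 2 with ht
  have htpos : 0 < t := by
    have : 0 < 1 / (s * M) := by positivity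
    rw [ht]; linarith
  have htl : 1 / (s * M) < t := by rw [ht]; linarith
  have htu : t < m := by rw [ht]; linarith
  set δ : ℝ := (m - t) / 2 with hδ
  have hδpos : 0 < δ := by rw [hδ]; linarith
  set w : Fin d → ℝ := fun j => if 0 < ω j then (0:ℝ) else 1 with hw
  have hcont : Continuous (fun ε : ℝ => g (t • y + ε • w)) := by
    apply hgcont.comp
    exact continuous_const.add (continuous_id.smul continuous_const)
  have h0 : g (t • y + (0:ℝ) • w) < t + δ := by
    have e : t • y + (0:ℝ) • w = t • y := by simp
    rw [e, hghomog t htpos]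
    nlinarith
  have h2 : ∀ᶠ ε : ℝ in 𝓝 0, g (t • y + ε • w) < t + δ :=
    (hcont.tendsto 0).eventually (eventually_lt_nhds h0)
  obtain ⟨γ, hγpos, hγ⟩ := Metric.eventually_nhds_iff.mp h2
  set ε : ℝ := γ / 2 with hε
  have hεpos : 0 < ε := by positivity
  have hεlt : dist ε (0:ℝ) < γ := by
    rw [Real.dist_eq, sub_zero, abs_of_pos hεpos]; linarith
  have hgz : g (t • y + ε • w) < t + δ := hγ hεlt
  have hz : ∀ j, ω j / M < (t • y + ε • w) j := by
    intro j
    have e : (t • y + ε • w) j = t * y j + ε * w j := rfl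
    rw [e]
    by_cases hj : 0 < ω j
    · have hwj : w j = 0 := by simp [hw, hj]
      rw [hwj, mul_zero, add_zero]
      have h3 : 1 < t * (s * M) := by
        have e : (1 / (s*M)) * (s*M) = 1 := by field_simp
        nlinarith [mul_lt_mul_of_pos_right htl hsM]
      have h4 : ω j * s ≤ y j := hyK j hj
      have h5 : ω j / M < t * (ω j * s) := by
        rw [div_lt_iff₀ hM]
        nlinarith
      calc ω j / M < t * (ω j * s) := h5
        _ ≤ t * y j := mul_le_mul_of_nonneg_left h4 htpos.le
    · have hwj : w j = 1 := by simp [hw, hj]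
      have hωj : ω j = 0 := le_antisymm (not_lt.mp hj) (hω j)
      rw [hwj, mul_one, hωj, zero_div]
      have : 0 ≤ t * y j := mul_nonneg htpos.le (hynn j)
      linarith
  have h6 : m < g (t • y + ε • w) := by
    rw [hm]
    exact sInf_lt_gauge g hghomog hgmax ω hω M hM l hl hωl _ hz
  rw [hδ] at hgz
  linarith

end AngularAux

set_option maxHeartbeats 2000000

/-- Proposition 8 of the paper: under the hypotheses of the proposition
linking `λ` to the limit set `G = {x ∈ ℝ₊^d : g(x) ≤ 1}`,
`r_ω = [min_{y ∈ B_ω} g(y)]⁻¹` and hence `λ(ω) = max(ω) · min_{y ∈ B_ω} g(y)`, where `B_ω` is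
the boundary of `R_ω = ∏_j (ω_j/max(ω), ∞)`. -/
theorem angular_dependence_via_gauge
    {Ω : Type*} [MeasurableSpace Ω] (μ : Measure Ω) [IsProbabilityMeasure μ]
    {d : ℕ} (hd : 0 < d)
    (X : ℕ → Ω → (Fin d → ℝ)) (hXmeas : ∀ i, Measurable (X i))
    -- i.i.d. copies with standard exponential margins
    (hindep : iIndepFun X μ)
    (hident : ∀ i, Measure.map (X i) μ = Measure.map (X 0) μ)
    (hmarg : ∀ j, ∀ x : ℝ, 0 ≤ x → (μ {ω | x < X 0 ω j}).toReal = Real.exp (-x))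
    -- the gauge function g and its limit set G
    (g : (Fin d → ℝ) → ℝ) (hgcont : Continuous g)
    (hghomog : ∀ t : ℝ, 0 < t → ∀ x, g (t • x) = t * g x)
    (hgmax : ∀ x : Fin d → ℝ, (∀ j, 0 ≤ x j) → ∀ j, x j ≤ g x)
    (G : Set (Fin d → ℝ)) (hG : G = {x | (∀ j, 0 ≤ x j) ∧ g x ≤ 1})
    (hGsup : ∀ j, IsLUB ((fun x : Fin d → ℝ => x j) '' G) 1)
    (hconv : ConvInProbOnto μ (sampleCloud X fun n => Real.log n) G)
    -- the angular dependence function λ(ω)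
    (lam : (Fin d → ℝ) → ℝ)
    (hlam : ∀ ω : Fin d → ℝ, (∀ j, 0 ≤ ω j) → ∑ j, ω j = 1 →
      ∃ ℓ : ℝ → ℝ, SlowlyVaryingAtTop ℓ ∧ ∀ v : ℝ, 0 < v →
        (μ {a | ∀ j, ω j * v < X 0 a j}).toReal = ℓ (Real.exp v) * Real.exp (-(lam ω * v))) :
    ∀ ω : Fin d → ℝ, (∀ j, 0 ≤ ω j) → ∑ j, ω j = 1 →
      sInf {r : ℝ | r ∈ Set.Icc (0:ℝ) 1 ∧
          (r • {x : Fin d → ℝ | ∀ j, ω j / (⨆ i, ω i) < x j}) ∩ G = ∅} =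
        (sInf (g '' (⋃ i : Fin d, {x : Fin d → ℝ | (∀ j, 0 ≤ x j) ∧
          x i = ω i / (⨆ l, ω l) ∧ ∀ j, j ≠ i → ω j / (⨆ l, ω l) ≤ x j})))⁻¹ ∧
      lam ω = (⨆ j, ω j) *
        sInf (g '' (⋃ i : Fin d, {x : Fin d → ℝ | (∀ j, 0 ≤ x j) ∧
          x i = ω i / (⨆ l, ω l) ∧ ∀ j, j ≠ i → ω j / (⨆ l, ω l) ≤ x j})) := by
  intro ω hω hsum
  haveI : Nonempty (Fin d) := ⟨⟨0, hd⟩⟩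
  obtain ⟨l, hl, hMl, hωl⟩ := geom_main hd g hgcont hghomog hgmax ω hω hsum
  set M : ℝ := ⨆ i, ω i with hMdef
  have hMpos : 0 < M := hMl ▸ hωl
  have hlM : ω l = M := hMl.symm
  set B : Set (Fin d → ℝ) := ⋃ i : Fin d, {x : Fin d → ℝ | (∀ j, 0 ≤ x j) ∧
      x i = ω i / M ∧ ∀ j, j ≠ i → ω j / M ≤ x j} with hBdef
  have hBB : B = AngularAux.Bset ω M := rfl
  set m : ℝ := sInf (g '' B) with hmdef
  have h1m : (1:ℝ) ≤ m := by
    rw [hmdef, hBB]; exact AngularAux.one_le_sInf g hgmax ω hω M hMpos l hlM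
  have hmpos : (0:ℝ) < m := lt_of_lt_of_le one_pos h1m
  have hL : ∀ u : Fin d → ℝ, (∀ j, ω j / M < u j) → m < g u := by
    intro u hu
    rw [hmdef, hBB]
    exact AngularAux.sInf_lt_gauge g hghomog hgmax ω hω M hMpos l hlM (hlM ▸ hMpos) u hu
  have hBne : (AngularAux.Bset ω M).Nonempty :=
    ⟨fun j => ω j / M, AngularAux.self_mem_Bset ω hω M hMpos l⟩
  have hD : ∀ ρ : ℝ, 0 < ρ → ρ * m < 1 →
      ∃ x : Fin d → ℝ, (∀ j, ρ * (ω j / M) < x j) ∧ (∀ j, 0 ≤ x j) ∧ g x < 1 := by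
    intro ρ hρ hρm
    exact AngularAux.exists_interior_point g hgcont hghomog ω M hMpos hρ hBne
      (by rw [hmdef, hBB] at hρm; exact hρm)
  have hg0 : g 0 = 0 := by
    have h2 := hghomog 2 two_pos 0
    rw [smul_zero] at h2
    linarith
  have h0G : (0 : Fin d → ℝ) ∈ G := by
    rw [hG]
    exact ⟨fun j => le_refl 0, by rw [hg0]; norm_num⟩
  set R : Set (Fin d → ℝ) := {x : Fin d → ℝ | ∀ j, ω j / M < x j} with hRdef
  have hRne : R.Nonempty := ⟨fun j => ω j / M + 1, fun j => by simp⟩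
  -- part 1
  have part1 : sInf {r : ℝ | r ∈ Set.Icc (0:ℝ) 1 ∧ (r • R) ∩ G = ∅} = m⁻¹ := by
    have hmem : m⁻¹ ∈ {r : ℝ | r ∈ Set.Icc (0:ℝ) 1 ∧ (r • R) ∩ G = ∅} := by
      refine ⟨⟨inv_nonneg.mpr hmpos.le, ?_⟩, ?_⟩
      · rw [inv_le_one_iff₀]; right; exact h1m
      · rw [Set.eq_empty_iff_forall_notMem]
        rintro x ⟨hx1, hx2⟩
        obtain ⟨u, hu, rfl⟩ := hx1
        have hinv : (0:ℝ) < m⁻¹ := by positivity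
        have h2 : g (m⁻¹ • u) = m⁻¹ * g u := hghomog _ hinv u
        have h3 : m < g u := hL u hu
        have h4 : 1 < g (m⁻¹ • u) := by
          rw [h2]
          calc (1:ℝ) = m⁻¹ * m := by field_simp
            _ < m⁻¹ * g u := by exact mul_lt_mul_of_pos_left h3 hinv
        rw [hG] at hx2
        exact absurd hx2.2 (by linarith)
    apply le_antisymm
    · exact csInf_le ⟨0, fun r hr => hr.1.1⟩ hmem
    · refine le_csInf ⟨m⁻¹, hmem⟩ ?_
      rintro r ⟨⟨hr0, hr1⟩, hempty⟩
      by_contra hcon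
      push_neg at hcon
      rcases eq_or_lt_of_le hr0 with h | h
      · -- r = 0
        rw [← h] at hempty
        rw [Set.zero_smul_set hRne] at hempty
        have : (0 : Fin d → ℝ) ∈ ((0 : Set (Fin d → ℝ)) ∩ G) := ⟨rfl, h0G⟩
        rw [hempty] at this
        exact this
      · -- 0 < r
        have hrm : r * m < 1 := by
          calc r * m < m⁻¹ * m := mul_lt_mul_of_pos_right hcon hmpos
            _ = 1 := by field_simp
        obtain ⟨x, hx1, hx2, hx3⟩ := hD r h hrm
        have hxR : x ∈ r • R := by
          refine ⟨r⁻¹ • x, ?_, ?_⟩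
          · intro j
            have := hx1 j
            show ω j / M < r⁻¹ * x j
            rw [lt_inv_mul_iff₀ h]
            linarith [this]
          · show r • r⁻¹ • x = x
            exact smul_inv_smul₀ (ne_of_gt h) x
        have hxG : x ∈ G := by rw [hG]; exact ⟨hx2, hx3.le⟩
        have : x ∈ (r • R) ∩ G := ⟨hxR, hxG⟩
        rw [hempty] at this
        exact this
  refine ⟨part1, ?_⟩
  -- ### Part 2 : the probabilistic identity
  obtain ⟨ℓ, hsv, hℓeq⟩ := hlam ω hω hsum
  set A : ℝ → Set (Fin d → ℝ) := fun v => {y : Fin d → ℝ | ∀ j, ω j * v < y j} with hAdef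
  have hAmeas : ∀ v : ℝ, MeasurableSet (A v) := by
    intro v
    have e : A v = ⋂ j, {y : Fin d → ℝ | ω j * v < y j} := by
      ext y; simp [hAdef, Set.mem_iInter]
    rw [e]
    exact MeasurableSet.iInter fun j => measurableSet_lt measurable_const (measurable_pi_apply j)
  have hprei : ∀ (i : ℕ) (S : Set (Fin d → ℝ)), MeasurableSet S →
      μ (X i ⁻¹' S) = μ (X 0 ⁻¹' S) := by
    intro i S hS
    rw [← Measure.map_apply (hXmeas i) hS, hident i, Measure.map_apply (hXmeas 0) hS]
  set p : ℝ → ℝ := fun v => (μ (X 0 ⁻¹' A v)).toReal with hpdef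
  have hpanti : ∀ a b : ℝ, 0 < a → a ≤ b → p b ≤ p a := by
    intro a b _ hab
    apply ENNReal.toReal_mono (measure_ne_top μ _)
    apply measure_mono
    intro x hx j
    exact lt_of_le_of_lt (mul_le_mul_of_nonneg_left hab (hω j)) (hx j)
  have hpnn : ∀ v : ℝ, 0 < v → 0 ≤ p v := fun v _ => ENNReal.toReal_nonneg
  have hpeq : ∀ v : ℝ, 0 < v → p v = ℓ (Real.exp v) * Real.exp (-(lam ω * v)) :=
    fun v hv => hℓeq v hv
  have aux := sv_npow_aux ℓ hsv (lam ω) p hpanti hpnn hpeq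
  -- compactness of G and basic facts on the sample clouds
  have hGne : G.Nonempty := ⟨0, h0G⟩
  have hGbdd : Bornology.IsBounded G := by
    apply (Metric.isBounded_closedBall (x := (0 : Fin d → ℝ)) (r := 1)).subset
    intro x hx
    rw [hG] at hx
    rw [Metric.mem_closedBall]
    rw [dist_pi_le_iff zero_le_one]
    intro j
    rw [Real.dist_eq, Pi.zero_apply, sub_zero, abs_of_nonneg (hx.1 j)]
    exact le_trans (hgmax x hx.1 j) hx.2
  have hGclosed : IsClosed G := by
    rw [hG]
    have e : {x : Fin d → ℝ | (∀ j, 0 ≤ x j) ∧ g x ≤ 1} =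
        (⋂ j, {x : Fin d → ℝ | 0 ≤ x j}) ∩ {x | g x ≤ 1} := by
      ext x; simp [Set.mem_iInter]
    rw [e]
    exact IsClosed.inter
      (isClosed_iInter fun j => isClosed_le continuous_const (continuous_apply j))
      (isClosed_le hgcont continuous_const)
  have hGcompact : IsCompact G := Metric.isCompact_of_isClosed_isBounded hGclosed hGbdd
  have hcloudeq : ∀ (n : ℕ) (a : Ω), sampleCloud X (fun k : ℕ => Real.log k) n a =
      (fun i : ℕ => (Real.log (n:ℕ))⁻¹ • X i a) '' (Set.Icc 1 n) := by
    intro n a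
    ext y
    constructor
    · rintro ⟨i, h1, h2, rfl⟩; exact ⟨i, Set.mem_Icc.mpr ⟨h1, h2⟩, rfl⟩
    · rintro ⟨i, hi, rfl⟩
      obtain ⟨h1, h2⟩ := Set.mem_Icc.mp hi
      exact ⟨i, h1, h2, rfl⟩
  have hcloudbdd : ∀ (n : ℕ) (a : Ω),
      Bornology.IsBounded (sampleCloud X (fun k : ℕ => Real.log k) n a) := by
    intro n a; rw [hcloudeq]; exact ((Set.finite_Icc 1 n).image _).isBounded
  have hcloudne : ∀ (n : ℕ), 1 ≤ n → ∀ (a : Ω),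
      (sampleCloud X (fun k : ℕ => Real.log k) n a).Nonempty :=
    fun n hn a => ⟨(Real.log (n:ℕ))⁻¹ • X 1 a, 1, le_refl 1, hn, rfl⟩
  have hedist : ∀ (n : ℕ), 1 ≤ n → ∀ (a : Ω),
      EMetric.hausdorffEdist (sampleCloud X (fun k : ℕ => Real.log k) n a) G ≠ ⊤ :=
    fun n hn a => Metric.hausdorffEdist_ne_top_of_nonempty_of_bounded
      (hcloudne n hn a) hGne (hcloudbdd n a) hGbdd
  -- ### upper bound : lam ω ≤ M * m
  have hle1 : lam ω ≤ M * m := by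
    by_contra hcon
    push_neg at hcon
    have hMm : 0 < M * m := mul_pos hMpos hmpos
    have hlampos : 0 < lam ω := lt_trans hMm hcon
    have hden : 0 < lam ω + M * m := by linarith
    set s : ℝ := 2 / (lam ω + M * m) with hsdef
    have hspos : 0 < s := by positivity
    have hs1 : 1 < lam ω * s := by
      have e : lam ω * s = 2 * lam ω / (lam ω + M * m) := by rw [hsdef]; ring
      rw [e, lt_div_iff₀ hden]; linarith
    have hs2 : s * M * m < 1 := by
      have e : s * M * m = 2 * (M * m) / (lam ω + M * m) := by rw [hsdef]; ring
      rw [e, div_lt_one hden]; linarith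
    obtain ⟨x, hx1, hx2, hx3⟩ := hD (s * M) (by positivity) hs2
    have hsx : ∀ j, ω j * s < x j := by
      intro j
      have h5 := hx1 j
      have e : s * M * (ω j / M) = ω j * s := by field_simp
      rwa [e] at h5
    have hxG : x ∈ G := by rw [hG]; exact ⟨hx2, hx3.le⟩
    set ε : ℝ := Finset.univ.inf' Finset.univ_nonempty (fun j => x j - ω j * s) with hεdef
    have hεpos : 0 < ε := by
      rw [hεdef, Finset.lt_inf'_iff]
      intro j _
      exact sub_pos.mpr (hsx j)
    have hball : ∀ z : Fin d → ℝ, dist x z < ε → ∀ j, ω j * s < z j := by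
      intro z hz j
      have h1 : dist (x j) (z j) ≤ dist x z := dist_le_pi_dist x z j
      have h2 : ε ≤ x j - ω j * s := by
        rw [hεdef]; exact Finset.inf'_le _ (Finset.mem_univ j)
      have h3 : |x j - z j| < x j - ω j * s := by
        rw [← Real.dist_eq]; linarith
      have h4 := (abs_lt.mp h3).2
      linarith
    have hEbound : ∀ n : ℕ, μ (⋃ i ∈ Finset.Icc 1 n, X i ⁻¹' A (s * Real.log n)) ≤
        (n : ℝ≥0∞) * μ (X 0 ⁻¹' A (s * Real.log n)) := by
      intro n
      calc μ (⋃ i ∈ Finset.Icc 1 n, X i ⁻¹' A (s * Real.log n))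
          ≤ ∑ i ∈ Finset.Icc 1 n, μ (X i ⁻¹' A (s * Real.log n)) :=
            measure_biUnion_finset_le _ _
        _ = ∑ i ∈ Finset.Icc 1 n, μ (X 0 ⁻¹' A (s * Real.log n)) :=
            Finset.sum_congr rfl fun i _ => hprei i _ (hAmeas _)
        _ = (n : ℝ≥0∞) * μ (X 0 ⁻¹' A (s * Real.log n)) := by
            rw [Finset.sum_const, Nat.card_Icc]
            simp [nsmul_eq_mul]
    have hinc : ∀ n : ℕ, 2 ≤ n → ∀ a : Ω,
        Metric.hausdorffDist (sampleCloud X (fun k : ℕ => Real.log k) n a) G < ε →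
        a ∈ ⋃ i ∈ Finset.Icc 1 n, X i ⁻¹' A (s * Real.log n) := by
      intro n hn a hdist
      obtain ⟨z, hzmem, hzdist⟩ :=
        Metric.exists_dist_lt_of_hausdorffDist_lt' hxG hdist (hedist n (by omega) a)
      obtain ⟨i, hi1, hi2, rfl⟩ := hzmem
      refine Set.mem_iUnion₂.mpr ⟨i, Finset.mem_Icc.mpr ⟨hi1, hi2⟩, ?_⟩
      intro j
      rw [dist_comm] at hzdist
      have hzj := hball _ hzdist j
      have hlogpos : (0:ℝ) < Real.log n := Real.log_pos (by exact_mod_cast hn)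
      have e : ((Real.log (n:ℕ))⁻¹ • X i a) j = (Real.log (n:ℕ))⁻¹ * X i a j := rfl
      rw [e] at hzj
      calc ω j * (s * Real.log n) = (ω j * s) * Real.log n := by ring
        _ < ((Real.log (n:ℕ))⁻¹ * X i a j) * Real.log n :=
            mul_lt_mul_of_pos_right hzj hlogpos
        _ = X i a j := by field_simp
    have ev1 := (aux s hspos).2 hs1
    have ev2 : ∀ᶠ n : ℕ in atTop,
        (μ {a | ε/2 < Metric.hausdorffDist (sampleCloud X (fun k : ℕ => Real.log k) n a) G}).toReal
          < 1/2 := by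
      have h6 := hconv (ε/2) (by positivity)
      have h7 := h6.eventually_lt_const
        (show (0:ℝ≥0∞) < ENNReal.ofReal (1/2) by simp)
      filter_upwards [h7] with n hn
      exact ENNReal.toReal_lt_of_lt_ofReal hn
    obtain ⟨n, hn2, hnp, hnconv⟩ := ((eventually_ge_atTop 2).and (ev1.and ev2)).exists
    obtain ⟨hnp, hnconv⟩ := And.intro hnp hnconv
    set E := ⋃ i ∈ Finset.Icc 1 n, X i ⁻¹' A (s * Real.log n) with hEdef
    have hE1 : (μ E).toReal < 1/2 := by
      have h8 : μ E ≤ (n : ℝ≥0∞) * μ (X 0 ⁻¹' A (s * Real.log n)) := hEbound n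
      have h9 : (μ E).toReal ≤ (n:ℝ) * p (s * Real.log n) := by
        have h10 := ENNReal.toReal_mono
          (ENNReal.mul_ne_top (ENNReal.natCast_ne_top n) (measure_ne_top μ _)) h8
        rwa [ENNReal.toReal_mul, ENNReal.toReal_natCast n] at h10
      linarith
    have hE2 : (μ Eᶜ).toReal < 1/2 := by
      have hsub : Eᶜ ⊆ {a | ε/2 <
          Metric.hausdorffDist (sampleCloud X (fun k : ℕ => Real.log k) n a) G} := by
        intro a ha
        by_contra hno
        simp only [Set.mem_setOf_eq, not_lt] at hno
        exact ha (hinc n hn2 a (lt_of_le_of_lt hno (by linarith)))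
      have h11 := ENNReal.toReal_mono (measure_ne_top μ _) (measure_mono hsub)
      linarith
    have huniv : (1:ℝ) ≤ (μ E).toReal + (μ Eᶜ).toReal := by
      have h10 : μ Set.univ ≤ μ E + μ Eᶜ := by
        rw [← Set.union_compl_self E]; exact measure_union_le _ _
      rw [measure_univ] at h10
      have h11 := ENNReal.toReal_mono
        (ENNReal.add_ne_top.mpr ⟨measure_ne_top μ _, measure_ne_top μ _⟩) h10
      rwa [ENNReal.toReal_add (measure_ne_top μ _) (measure_ne_top μ _),
        ENNReal.toReal_one] at h11
    linarith
  -- ### lower bound : M * m ≤ lam ω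
  have hle2 : M * m ≤ lam ω := by
    by_contra hcon
    push_neg at hcon
    have hMm : 0 < M * m := mul_pos hMpos hmpos
    obtain ⟨s, hspos, hs1, hs2⟩ : ∃ s : ℝ, 0 < s ∧ lam ω * s < 1 ∧ 1 < s * M * m := by
      rcases le_or_gt (lam ω) 0 with hneg | hpos
      · refine ⟨2 / (M * m), by positivity, ?_, ?_⟩
        · have h5 : lam ω * (2 / (M * m)) ≤ 0 :=
            mul_nonpos_of_nonpos_of_nonneg hneg (by positivity)
          linarith
        · have e : 2 / (M * m) * M * m = 2 := by field_simp
          rw [e]; norm_num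
      · have hden : 0 < lam ω + M * m := by linarith
        refine ⟨2 / (lam ω + M * m), by positivity, ?_, ?_⟩
        · have e : lam ω * (2 / (lam ω + M * m)) = 2 * lam ω / (lam ω + M * m) := by ring
          rw [e, div_lt_one hden]; linarith
        · have e : 2 / (lam ω + M * m) * M * m = 2 * (M * m) / (lam ω + M * m) := by ring
          rw [e, lt_div_iff₀ hden]; linarith
    set K : Set (Fin d → ℝ) := {x | ∀ j, 0 < ω j → ω j * s ≤ x j} with hKdef
    have hKclosed : IsClosed K := by
      have e : K = ⋂ j, {x : Fin d → ℝ | 0 < ω j → ω j * s ≤ x j} := by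
        ext x; simp [hKdef, Set.mem_iInter]
      rw [e]
      refine isClosed_iInter fun j => ?_
      by_cases hj : 0 < ω j
      · have e2 : {x : Fin d → ℝ | 0 < ω j → ω j * s ≤ x j} = {x | ω j * s ≤ x j} := by
          ext x; simp [hj]
        rw [e2]; exact isClosed_le continuous_const (continuous_apply j)
      · have e2 : {x : Fin d → ℝ | 0 < ω j → ω j * s ≤ x j} = Set.univ := by
          ext x; simp [hj]
        rw [e2]; exact isClosed_univ
    have hdisj : Disjoint G K := by
      rw [hG, hKdef]
      exact AngularAux.disjoint_G_K g hgcont hghomog hgmax ω hω M hMpos l hlM hωl s hspos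
        (by rw [hmdef, hBB] at hs2; exact hs2)
    obtain ⟨δ, hδpos, hδdisj⟩ := hdisj.exists_thickenings hGcompact hKclosed
    have hDsub : ∀ n : ℕ, 2 ≤ n → ∀ a : Ω,
        Metric.hausdorffDist (sampleCloud X (fun k : ℕ => Real.log k) n a) G < δ →
        a ∈ ⋂ i ∈ Finset.Icc 1 n, X i ⁻¹' (A (s * Real.log n))ᶜ := by
      intro n hn a ha
      rw [Set.mem_iInter₂]
      intro i hi
      simp only [Set.mem_preimage, Set.mem_compl_iff]
      intro hmem
      obtain ⟨hi1, hi2⟩ := Finset.mem_Icc.mp hi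
      have hlogpos : (0:ℝ) < Real.log n := Real.log_pos (by exact_mod_cast hn)
      set z : Fin d → ℝ := (Real.log (n:ℕ))⁻¹ • X i a with hzdef
      have hzmem : z ∈ sampleCloud X (fun k : ℕ => Real.log k) n a := ⟨i, hi1, hi2, rfl⟩
      have hzK : z ∈ K := by
        intro j hj
        have h5 : ω j * (s * Real.log n) < X i a j := hmem j
        have e : z j = (Real.log (n:ℕ))⁻¹ * X i a j := rfl
        rw [e, inv_mul_eq_div, le_div_iff₀ hlogpos]
        have e2 : ω j * s * Real.log n = ω j * (s * Real.log n) := by ring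
        rw [e2]
        exact h5.le
      have hzG : z ∈ Metric.thickening δ G := by
        rw [Metric.mem_thickening_iff_infDist_lt hGne]
        exact lt_of_le_of_lt
          (Metric.infDist_le_hausdorffDist_of_mem hzmem (hedist n (by omega) a)) ha
      exact (Set.disjoint_left.mp hδdisj hzG) (Metric.self_subset_thickening hδpos K hzK)
    have hprod : ∀ n : ℕ, μ (⋂ i ∈ Finset.Icc 1 n, X i ⁻¹' (A (s * Real.log n))ᶜ) =
        μ (X 0 ⁻¹' (A (s * Real.log n))ᶜ) ^ n := by
      intro n
      have h5 := hindep.measure_inter_preimage_eq_mul (S := Finset.Icc 1 n)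
        (sets := fun _ => (A (s * Real.log n))ᶜ) (fun i _ => (hAmeas _).compl)
      rw [h5, Finset.prod_congr rfl (fun i _ => hprei i _ (hAmeas _).compl),
        Finset.prod_const, Nat.card_Icc]
      simp
    have hcompl : ∀ v : ℝ, (μ (X 0 ⁻¹' (A v)ᶜ)).toReal = 1 - p v := by
      intro v
      rw [Set.preimage_compl, measure_compl ((hXmeas 0) (hAmeas v)) (measure_ne_top μ _),
        measure_univ, ENNReal.toReal_sub_of_le prob_le_one ENNReal.one_ne_top,
        ENNReal.toReal_one]
    have ev1 := (aux s hspos).1 hs1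
    have ev2 : ∀ᶠ n : ℕ in atTop,
        (μ {a | δ/2 < Metric.hausdorffDist (sampleCloud X (fun k : ℕ => Real.log k) n a) G}).toReal
          < 1/2 := by
      have h6 := hconv (δ/2) (by positivity)
      have h7 := h6.eventually_lt_const
        (show (0:ℝ≥0∞) < ENNReal.ofReal (1/2) by simp)
      filter_upwards [h7] with n hn
      exact ENNReal.toReal_lt_of_lt_ofReal hn
    obtain ⟨n, hn2, hnp, hnconv⟩ := ((eventually_ge_atTop 2).and (ev1.and ev2)).exists
    obtain ⟨hnp, hnconv⟩ := And.intro hnp hnconv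
    set q : ℝ := p (s * Real.log n) with hq
    have hq0 : 0 ≤ q := ENNReal.toReal_nonneg
    have hq1 : q ≤ 1 := by
      rw [hq, hpdef]
      calc (μ (X 0 ⁻¹' A (s * Real.log n))).toReal
          ≤ (1 : ℝ≥0∞).toReal := ENNReal.toReal_mono ENNReal.one_ne_top prob_le_one
        _ = 1 := ENNReal.toReal_one
    set D := ⋂ i ∈ Finset.Icc 1 n, X i ⁻¹' (A (s * Real.log n))ᶜ with hDdef
    have hDval : (μ D).toReal = (1 - q)^n := by
      rw [hDdef, hprod n, ENNReal.toReal_pow, hcompl]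
    have hD2 : (μ Dᶜ).toReal < 1/2 := by
      have hsub : Dᶜ ⊆ {a | δ/2 <
          Metric.hausdorffDist (sampleCloud X (fun k : ℕ => Real.log k) n a) G} := by
        intro a ha
        by_contra hno
        simp only [Set.mem_setOf_eq, not_lt] at hno
        exact ha (hDsub n hn2 a (lt_of_le_of_lt hno (by linarith)))
      have h11 := ENNReal.toReal_mono (measure_ne_top μ _) (measure_mono hsub)
      linarith
    have huniv : (1:ℝ) ≤ (μ D).toReal + (μ Dᶜ).toReal := by
      have h10 : μ Set.univ ≤ μ D + μ Dᶜ := by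
        rw [← Set.union_compl_self D]; exact measure_union_le _ _
      rw [measure_univ] at h10
      have h11 := ENNReal.toReal_mono
        (ENNReal.add_ne_top.mpr ⟨measure_ne_top μ _, measure_ne_top μ _⟩) h10
      rwa [ENNReal.toReal_add (measure_ne_top μ _) (measure_ne_top μ _),
        ENNReal.toReal_one] at h11
    have hbig : (1:ℝ)/2 < (1 - q)^n := by rw [← hDval]; linarith
    have hsmall : (1 - q)^n < 1/2 := by
      have step1 : 1 - q ≤ Real.exp (-q) := by
        have := Real.add_one_le_exp (-q); linarith
      have step2 : (1 - q)^n ≤ (Real.exp (-q))^n :=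
        pow_le_pow_left₀ (by linarith) step1 n
      have step3 : (Real.exp (-q))^n = Real.exp ((n:ℝ) * (-q)) := (Real.exp_nat_mul _ n).symm
      have step4 : (n:ℝ) * (-q) ≤ -1 := by
        have : 1 ≤ (n:ℝ) * q := hnp
        linarith
      have step5 : Real.exp ((n:ℝ) * (-q)) ≤ Real.exp (-1) := Real.exp_le_exp.mpr step4
      have step6 : Real.exp (-1) < 1/2 := by
        rw [Real.exp_neg]
        have h7 : (2:ℝ) < Real.exp 1 := by
          have := Real.exp_one_gt_d9; norm_num at this ⊢; linarith
        have h8 : (Real.exp 1)⁻¹ < 2⁻¹ := inv_strictAnti₀ two_pos h7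
        linarith [h8]
      calc (1 - q)^n ≤ Real.exp ((n:ℝ) * (-q)) := step3 ▸ step2
        _ ≤ Real.exp (-1) := step5
        _ < 1/2 := step6
    linarith
  exact le_antisymm hle1 hle2
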